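/- Let (Ω, F, P) be a probability space, let τ_1 : [0,1] → ℝ be continuous and injective, let τ_2 : [0,1] → ℝ be any function, and let G be a random warping function on (Ω, F, P) such that for every t ∈ [0,1] the random variable G(·,t) is integrable with E[G(·,t)] = t. If for every t ∈ [0,1] one has τ_1(G(ω,t)) = τ_2(t) for P-almost every ω, then τ_1 = τ_2 on [0,1], and for every t ∈ [0,1], G(·,t) = t P-almost surely. -/

import Mathlib

open MeasureTheory Set

/-- Identification of the mean curve and the warping function when the warped mean
curve is observed exactly: if `τ₁(G(ω,t)) = τ₂(t)` almost surely for every `t ∈ [0,1]`,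
where `τ₁` is continuous and injective on `[0,1]` and `E[G(·,t)] = t`, then `τ₁ = τ₂`
on `[0,1]` and `G(·,t) = t` almost surely for every `t ∈ [0,1]`. -/
theorem identify_mean_curve_and_warping
    {Ω : Type*} [MeasurableSpace Ω] (P : Measure Ω) [IsProbabilityMeasure P]
    (τ₁ τ₂ : ℝ → ℝ)
    (hτ₁c : ContinuousOn τ₁ (Set.Icc 0 1)) (hτ₁inj : Set.InjOn τ₁ (Set.Icc 0 1))
    (G : Ω → ℝ → ℝ)
    -- random warping function: measurable evaluations, with values in [0,1]
    (hGmeas : ∀ t ∈ Set.Icc (0 : ℝ) 1, Measurable fun ω => G ω t)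
    (hGmaps : ∀ ω, Set.MapsTo (G ω) (Set.Icc 0 1) (Set.Icc 0 1))
    -- integrability and the normalization E[G(·,t)] = t
    (hGint : ∀ t ∈ Set.Icc (0 : ℝ) 1, Integrable (fun ω => G ω t) P)
    (hGmean : ∀ t ∈ Set.Icc (0 : ℝ) 1, ∫ ω, G ω t ∂P = t)
    -- the warped mean curve equals τ₂ almost surely, pointwise in t
    (heq : ∀ t ∈ Set.Icc (0 : ℝ) 1, ∀ᵐ ω ∂P, τ₁ (G ω t) = τ₂ t) :
    Set.EqOn τ₁ τ₂ (Set.Icc 0 1) ∧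
      ∀ t ∈ Set.Icc (0 : ℝ) 1, ∀ᵐ ω ∂P, G ω t = t := by
  have key : ∀ t ∈ Set.Icc (0 : ℝ) 1, τ₁ t = τ₂ t ∧ (∀ᵐ ω ∂P, G ω t = t) := by
    intro t ht
    obtain ⟨ω₀, hω₀⟩ : ∃ ω₀, τ₁ (G ω₀ t) = τ₂ t := by
      have := (heq t ht).exists
      exact this
    have hGeq : ∀ᵐ ω ∂P, G ω t = G ω₀ t := by
      filter_upwards [heq t ht] with ω hω
      exact hτ₁inj (hGmaps ω ht) (hGmaps ω₀ ht) (hω.trans hω₀.symm)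
    have hint : ∫ ω, G ω t ∂P = G ω₀ t := by
      rw [integral_congr_ae hGeq, integral_const, probReal_univ,
        one_smul]
    have hGt : G ω₀ t = t := by rw [← hint, hGmean t ht]
    refine ⟨?_, ?_⟩
    · rw [← hω₀, hGt]
    · filter_upwards [hGeq] with ω hω
      rw [hω, hGt]
  exact ⟨fun t ht => (key t ht).1, fun t ht => (key t ht).2⟩
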